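/- Assume the perturbed blended dynamics (with synchronization errors e_i as inputs) is δ-ISS with (β, γ̂), and assume the funnel objective holds so that ‖e_i(t)‖_∞ ≤ d_G Ψ(t) for all i and t ≥ t_0. Then for any decreasing w : [0, ∞) → (0, 1] with lim w = 0 there exists γ ∈ 𝒦_∞ such that, for each agent i, ‖(y_i(t), z_i(t)) − (ŝ(t), ẑ_i(t))‖_∞ ≤ γ(sup_{s∈[t_0,t)} d_G Ψ(s) w(t − s)) + d_G Ψ(t) for all t ≥ t_0, where (ŝ, ẑ_1, ..., ẑ_N) solves the (unperturbed) blended dynamics with ŝ(t_0) = (1/N)∑_i y_i(t_0) and ẑ_i(t_0) = z_i(t_0). In particular, if lim_{t→∞} Ψ(t) = 0, the network behavior asymptotically coincides with the blended dynamics. -/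

import Mathlib

open Filter

def ClassKinf (γ : ℝ → ℝ) : Prop :=
  ContinuousOn γ (Set.Ici 0) ∧ StrictMonoOn γ (Set.Ici 0) ∧ γ 0 = 0 ∧
    Tendsto γ atTop atTop

def ClassKL (β : ℝ → ℝ → ℝ) : Prop :=
  (∀ t ∈ Set.Ici (0 : ℝ), ContinuousOn (fun r => β r t) (Set.Ici 0) ∧
      StrictMonoOn (fun r => β r t) (Set.Ici 0) ∧ β 0 t = 0) ∧
  (∀ r > (0 : ℝ), AntitoneOn (β r) (Set.Ici 0) ∧ Tendsto (β r) atTop (nhds 0)) ∧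
  (∀ r ≥ (0 : ℝ), ∀ t ≥ (0 : ℝ), 0 ≤ β r t)

open intervalIntegral MeasureTheory in
private lemma exists_Kinf_majorant (G : ℝ → ℝ) (hmono : Monotone G) (hnn : ∀ r, 0 ≤ G r)
    (hsmall : ∀ ε > 0, ∃ δ > 0, G δ < ε) :
    ∃ γ : ℝ → ℝ, (ContinuousOn γ (Set.Ici 0) ∧ StrictMonoOn γ (Set.Ici 0) ∧ γ 0 = 0 ∧
      Tendsto γ atTop atTop) ∧ ∀ r ≥ 0, G r ≤ γ r := by
  -- G 0 = 0
  have hG0 : G 0 = 0 := by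
    refine le_antisymm ?_ (hnn 0)
    by_contra h
    push_neg at h
    obtain ⟨δ, hδ, hlt⟩ := hsmall (G 0) h
    exact absurd (hmono hδ.le) (not_le.mpr hlt)
  have hint : ∀ a b : ℝ, IntervalIntegrable G volume a b := fun a b =>
    hmono.intervalIntegrable
  -- the averaged version
  set I : ℝ → ℝ := fun r => ∫ u in (1:ℝ)..2, G (r * u) with hI
  have hint2 : ∀ r : ℝ, 0 ≤ r → IntervalIntegrable (fun u => G (r * u)) volume 1 2 := by
    intro r hr
    exact (hmono.comp (fun a b hab => mul_le_mul_of_nonneg_left hab hr)).intervalIntegrable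
  have hIlb : ∀ r : ℝ, 0 ≤ r → G r ≤ I r := by
    intro r hr
    have : (∫ _ in (1:ℝ)..2, G r) ≤ I r := by
      apply integral_mono_on (by norm_num) (by simp [_root_.intervalIntegrable_const]) (hint2 r hr)
      intro u hu
      exact hmono (le_mul_of_one_le_right hr hu.1)
    simp at this; linarith
  have hIub : ∀ r : ℝ, 0 ≤ r → I r ≤ G (2 * r) := by
    intro r hr
    have : I r ≤ ∫ _ in (1:ℝ)..2, G (2 * r) := by
      apply integral_mono_on (by norm_num) (hint2 r hr) (by simp [_root_.intervalIntegrable_const])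
      intro u hu
      exact hmono (by nlinarith [hu.2])
    simp at this; linarith
  have hImono : ∀ r1 r2 : ℝ, 0 ≤ r1 → r1 ≤ r2 → I r1 ≤ I r2 := by
    intro r1 r2 h1 h12
    apply integral_mono_on (by norm_num) (hint2 r1 h1) (hint2 r2 (h1.trans h12))
    intro u hu
    exact hmono (mul_le_mul_of_nonneg_right h12 (by linarith [hu.1]))
  have hInn : ∀ r : ℝ, 0 ≤ r → 0 ≤ I r := fun r hr => (hnn r).trans (hIlb r hr)
  -- G tends to 0 at 0 from the right, hence so does I
  have hGto : Tendsto G (nhdsWithin 0 (Set.Ici 0)) (nhds 0) := by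
    rw [Metric.tendsto_nhdsWithin_nhds]
    intro ε hε
    obtain ⟨δ, hδ, hlt⟩ := hsmall ε hε
    refine ⟨δ, hδ, fun x hx hxd => ?_⟩
    rw [Real.dist_eq, sub_zero, abs_of_nonneg (hnn x)]
    calc G x ≤ G δ := hmono (le_of_lt (by
            rw [Real.dist_eq, sub_zero, abs_of_nonneg (Set.mem_Ici.mp hx)] at hxd; exact hxd))
    _ < ε := hlt
  have hIto : Tendsto I (nhdsWithin 0 (Set.Ici 0)) (nhds 0) := by
    have h2 : Tendsto (fun r => G (2 * r)) (nhdsWithin 0 (Set.Ici 0)) (nhds 0) := by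
      apply hGto.comp
      apply tendsto_nhdsWithin_of_tendsto_nhds_of_eventually_within
      · have : Tendsto (fun r : ℝ => 2 * r) (nhds 0) (nhds 0) := by
          simpa using (continuous_mul_left (2:ℝ)).tendsto (0:ℝ)
        exact this.mono_left nhdsWithin_le_nhds
      · filter_upwards [self_mem_nhdsWithin] with x hx
        exact Set.mem_Ici.mpr (mul_nonneg (by norm_num) (Set.mem_Ici.mp hx))
    apply tendsto_of_tendsto_of_tendsto_of_le_of_le' tendsto_const_nhds h2
    · filter_upwards [self_mem_nhdsWithin] with x hx using hInn x hx
    · filter_upwards [self_mem_nhdsWithin] with x hx using hIub x hx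
  -- continuity of I on (0, ∞) via change of variables
  have hH : Continuous fun x => ∫ u in (0:ℝ)..x, G u := continuous_primitive hint 0
  have hIeq : ∀ r : ℝ, r ≠ 0 → I r = r⁻¹ * ((∫ u in (0:ℝ)..(r*2), G u) - ∫ u in (0:ℝ)..(r*1), G u) := by
    intro r hr
    have := integral_comp_mul_left (a := (1:ℝ)) (b := 2) G hr
    rw [hI]
    simp only [this, smul_eq_mul]
    rw [integral_interval_sub_left (hint 0 (r*2)) (hint 0 (r*1))]
  have hIcont : ∀ r : ℝ, 0 < r → ContinuousAt I r := by
    intro r hr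
    have : ContinuousAt (fun x : ℝ => x⁻¹ * ((∫ u in (0:ℝ)..(x*2), G u) - ∫ u in (0:ℝ)..(x*1), G u)) r := by
      apply ContinuousAt.mul
      · exact continuousAt_inv₀ (ne_of_gt hr)
      · exact ((hH.comp (continuous_id.mul continuous_const)).sub
          (hH.comp (continuous_id.mul continuous_const))).continuousAt
    apply this.congr
    filter_upwards [eventually_ne_nhds (ne_of_gt hr)] with x hx
    exact (hIeq x hx).symm
  refine ⟨fun r => r + I r, ⟨?_, ?_, ?_, ?_⟩, ?_⟩
  · intro r hr
    rcases eq_or_lt_of_le (Set.mem_Ici.mp hr) with h | h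
    · apply ContinuousWithinAt.add continuousWithinAt_id
      show ContinuousWithinAt I (Set.Ici 0) r
      rw [← h]
      unfold ContinuousWithinAt
      convert hIto using 2
      exact le_antisymm (by simpa [hG0] using hIub 0 le_rfl) (hInn 0 le_rfl)
    · exact ((continuousAt_id.add (hIcont r h)).continuousWithinAt)
  · intro r1 h1 r2 h2 h12
    have := hImono r1 r2 h1 h12.le
    simpa using add_lt_add_of_lt_of_le h12 this
  · have h1 := hInn 0 le_rfl
    have h2 := (hIub 0 le_rfl)
    simp [hG0] at h2
    simp [le_antisymm h2 h1]
  · apply tendsto_atTop_mono' _ _ tendsto_id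
    filter_upwards [eventually_ge_atTop (0:ℝ)] with r hr
    simpa using hInn r hr
  · intro r hr
    have := hIlb r hr
    show G r ≤ r + I r
    linarith

/-- Emergent behavior (Corollary 2): if the perturbed blended dynamics is δ-ISS with
`(β, γ̂)` and the funnel objective gives `‖e_i(t)‖ ≤ d_G Ψ(t)`, then for any decaying
weight `w` there is `γ ∈ 𝒦_∞` such that every agent's trajectory is close to the solution
of the (unperturbed) blended dynamics started from the averaged initial condition:
`‖(y_i(t), z_i(t)) - (ŝ(t), ẑ_i(t))‖ ≤ γ(sup_{s∈[t_0,t)} d_G Ψ(s) w(t-s)) + d_G Ψ(t)`. -/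
theorem stmt10 {N m : ℕ} (hN : 0 < N) (nz : Fin N → ℕ)
    (F : (i : Fin N) → ℝ → (Fin m → ℝ) → (Fin (nz i) → ℝ) → (Fin m → ℝ))
    (Z : (i : Fin N) → ℝ → (Fin (nz i) → ℝ) → (Fin m → ℝ) → (Fin (nz i) → ℝ))
    (β : ℝ → ℝ → ℝ) (γhat : ℝ → ℝ) (hβ : ClassKL β) (hγ : ClassKinf γhat)
    (dG : ℝ) (hdG : 0 ≤ dG) (Ψ : ℝ → ℝ) (hΨ0 : ∀ t, 0 ≤ Ψ t)
    (hΨbd : ∃ MΨ, ∀ t, Ψ t ≤ MΨ)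
    -- δ-ISS of the perturbed blended dynamics, from any initial time:
    (hδISS : ∀ (t0' : ℝ) (σ σh : ℝ → Fin m → ℝ)
        (ζ ζh : (i : Fin N) → ℝ → Fin (nz i) → ℝ)
        (e eh : Fin N → ℝ → Fin m → ℝ),
        (∀ t ≥ t0', HasDerivAt σ ((N : ℝ)⁻¹ • ∑ i, F i t (σ t + e i t) (ζ i t)) t) →
        (∀ i, ∀ t ≥ t0', HasDerivAt (ζ i) (Z i t (ζ i t) (σ t + e i t)) t) →
        (∀ t ≥ t0', HasDerivAt σh ((N : ℝ)⁻¹ • ∑ i, F i t (σh t + eh i t) (ζh i t)) t) →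
        (∀ i, ∀ t ≥ t0', HasDerivAt (ζh i) (Z i t (ζh i t) (σh t + eh i t)) t) →
        ∀ t ≥ t0',
          ‖(σh t, fun i => ζh i t) - (σ t, fun i => ζ i t)‖ ≤
            β ‖(σh t0', fun i => ζh i t0') - (σ t0', fun i => ζ i t0')‖ (t - t0') +
            γhat (sSup {r | ∃ s ∈ Set.Ico t0' t, ∃ i, r = ‖eh i s - e i s‖}))
    (t0 : ℝ) (y : Fin N → ℝ → Fin m → ℝ) (z : (i : Fin N) → ℝ → Fin (nz i) → ℝ)
    -- network trajectory: the coupling terms cancel in the average: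
    (hs : ∀ t ≥ t0, HasDerivAt (fun τ => (N : ℝ)⁻¹ • ∑ i, y i τ)
        ((N : ℝ)⁻¹ • ∑ i, F i t (y i t) (z i t)) t)
    (hz : ∀ i, ∀ t ≥ t0, HasDerivAt (z i) (Z i t (z i t) (y i t)) t)
    -- funnel objective:
    (he : ∀ i, ∀ t ≥ t0, ‖y i t - (N : ℝ)⁻¹ • ∑ k, y k t‖ ≤ dG * Ψ t)
    -- solution of the (unperturbed) blended dynamics with matched initial condition:
    (sh : ℝ → Fin m → ℝ) (zh : (i : Fin N) → ℝ → Fin (nz i) → ℝ)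
    (hsh : ∀ t ≥ t0, HasDerivAt sh ((N : ℝ)⁻¹ • ∑ i, F i t (sh t) (zh i t)) t)
    (hzh : ∀ i, ∀ t ≥ t0, HasDerivAt (zh i) (Z i t (zh i t) (sh t)) t)
    (hsh0 : sh t0 = (N : ℝ)⁻¹ • ∑ i, y i t0)
    (hzh0 : ∀ i, zh i t0 = z i t0) :
    ∀ w : ℝ → ℝ,
      (∀ t ≥ (0 : ℝ), 0 < w t ∧ w t ≤ 1) → AntitoneOn w (Set.Ici 0) →
      Tendsto w atTop (nhds 0) →
      ∃ γ : ℝ → ℝ, ClassKinf γ ∧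
        ∀ i, ∀ t ≥ t0,
          ‖(y i t, z i t) - (sh t, zh i t)‖ ≤
            γ (sSup {r | ∃ s ∈ Set.Ico t0 t, r = dG * Ψ s * w (t - s)}) + dG * Ψ t := by
  intro w hw hwanti _hwlim
  obtain ⟨M0, hM0⟩ := hΨbd
  set M : ℝ := max M0 0 with hM
  have hMnn : 0 ≤ M := le_max_right _ _
  have hΨM : ∀ t, Ψ t ≤ M := fun t => (hM0 t).trans (le_max_left _ _)
  obtain ⟨hγc, hγm, hγ0, hγtop⟩ := hγ
  have hγmono : MonotoneOn γhat (Set.Ici 0) := hγm.monotoneOn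
  have hγnn : ∀ x, 0 ≤ x → 0 ≤ γhat x := fun x hx => by
    rw [← hγ0]; exact hγmono (Set.mem_Ici.mpr le_rfl) (Set.mem_Ici.mpr hx) hx
  set C : ℝ := γhat (dG * M) with hC
  have hCnn : 0 ≤ C := hγnn _ (mul_nonneg hdG hMnn)
  set sbar : ℝ → Fin m → ℝ := fun τ => (N : ℝ)⁻¹ • ∑ i, y i τ with hsbar
  set D : ℝ → ℝ := fun t => ‖(sh t, fun i => zh i t) - (sbar t, fun i => z i t)‖ with hD
  set E : ℝ → ℝ → ℝ :=
    fun τ t => sSup {r | ∃ s' ∈ Set.Ico τ t, ∃ i, r = ‖y i s' - sbar s'‖} with hE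
  have he' : ∀ i, ∀ t, t0 ≤ t → ‖y i t - sbar t‖ ≤ dG * Ψ t := fun i t ht => he i t ht
  -- instantiated derivative hypotheses
  have hd1 : ∀ t ≥ t0, HasDerivAt sbar
      ((N : ℝ)⁻¹ • ∑ i, F i t (sbar t + (y i t - sbar t)) (z i t)) t := by
    intro t ht
    have hc : ∀ i : Fin N, sbar t + (y i t - sbar t) = y i t := fun i => by abel
    simp only [hc]
    exact hs t ht
  have hd2 : ∀ i, ∀ t ≥ t0, HasDerivAt (z i)
      (Z i t (z i t) (sbar t + (y i t - sbar t))) t := by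
    intro i t ht
    have hc : sbar t + (y i t - sbar t) = y i t := by abel
    rw [hc]
    exact hz i t ht
  have hd3 : ∀ t ≥ t0, HasDerivAt sh
      ((N : ℝ)⁻¹ • ∑ i, F i t (sh t + (0 : Fin m → ℝ)) (zh i t)) t := by
    intro t ht
    simpa using hsh t ht
  have hd4 : ∀ i, ∀ t ≥ t0, HasDerivAt (zh i)
      (Z i t (zh i t) (sh t + (0 : Fin m → ℝ))) t := by
    intro i t ht
    simpa using hzh i t ht
  -- the restarting δ-ISS estimate
  have key : ∀ τ, t0 ≤ τ → ∀ t, τ ≤ t → D t ≤ β (D τ) (t - τ) + γhat (E τ t) := by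
    intro τ hτ t ht
    have h := hδISS τ sbar sh z zh (fun i τ' => y i τ' - sbar τ') (fun _ _ => 0)
      (fun t' ht' => hd1 t' (hτ.trans ht'))
      (fun i t' ht' => hd2 i t' (hτ.trans ht'))
      (fun t' ht' => hd3 t' (hτ.trans ht'))
      (fun i t' ht' => hd4 i t' (hτ.trans ht')) t ht
    simp only [zero_sub, norm_neg] at h
    exact h
  have hDnn : ∀ t, 0 ≤ D t := fun t => norm_nonneg _
  have hD0 : D t0 = 0 := by
    have hpair : (sh t0, fun i => zh i t0) = (sbar t0, fun i => z i t0) := by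
      refine Prod.ext ?_ ?_
      · exact hsh0
      · exact funext fun i => hzh0 i
    rw [hD]
    simp only [hpair, sub_self, norm_zero]
  have hEnn : ∀ τ t, 0 ≤ E τ t := by
    intro τ t
    apply Real.sSup_nonneg
    rintro r ⟨s', _, i, rfl⟩
    exact norm_nonneg _
  -- bound from the initial time
  have hA : ∀ t, t0 ≤ t → D t ≤ γhat (E t0 t) := by
    intro t ht
    have h := key t0 le_rfl t ht
    rw [hD0, (hβ.1 (t - t0) (Set.mem_Ici.mpr (by linarith))).2.2] at h
    linarith
  have hEle : ∀ τ t c, t0 ≤ τ → (∀ s', τ ≤ s' → s' < t → dG * Ψ s' ≤ c) → 0 ≤ c →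
      E τ t ≤ c := by
    intro τ t c hτ hbd hc
    apply Real.sSup_le _ hc
    rintro r ⟨s', ⟨h1, h2⟩, i, rfl⟩
    exact (he' i s' (hτ.trans h1)).trans (hbd s' h1 h2)
  have hB : ∀ t, t0 ≤ t → D t ≤ C := by
    intro t ht
    refine (hA t ht).trans (hγmono (Set.mem_Ici.mpr (hEnn t0 t))
      (Set.mem_Ici.mpr (mul_nonneg hdG hMnn)) ?_)
    exact hEle t0 t (dG * M) le_rfl
      (fun s' _ _ => mul_le_mul_of_nonneg_left (hΨM s') hdG) (mul_nonneg hdG hMnn)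
  -- the sSup appearing in the conclusion
  have hSnn : ∀ t, (0:ℝ) ≤ sSup {r | ∃ s ∈ Set.Ico t0 t, r = dG * Ψ s * w (t - s)} := by
    intro t
    apply Real.sSup_nonneg
    rintro r ⟨s', ⟨h1, h2⟩, rfl⟩
    exact mul_nonneg (mul_nonneg hdG (hΨ0 s')) (hw (t - s') (by linarith)).1.le
  have hSmem : ∀ t s', t0 ≤ s' → s' < t →
      dG * Ψ s' * w (t - s') ≤ sSup {r | ∃ s ∈ Set.Ico t0 t, r = dG * Ψ s * w (t - s)} := by
    intro t s' h1 h2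
    apply le_csSup
    · refine ⟨dG * M, ?_⟩
      rintro r ⟨u, ⟨hu1, hu2⟩, rfl⟩
      calc dG * Ψ u * w (t - u) ≤ dG * Ψ u * 1 :=
            mul_le_mul_of_nonneg_left (hw (t - u) (by linarith)).2
              (mul_nonneg hdG (hΨ0 u))
        _ = dG * Ψ u := mul_one _
        _ ≤ dG * M := mul_le_mul_of_nonneg_left (hΨM u) hdG
    · exact ⟨s', ⟨h1, h2⟩, rfl⟩
  set S : ℝ → ℝ := fun t => sSup {r | ∃ s ∈ Set.Ico t0 t, r = dG * Ψ s * w (t - s)} with hSdef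
  -- the key uniform-in-T bound
  have hCbd : ∀ T, 0 ≤ T → ∀ t, t0 ≤ t → D t ≤ β C T + γhat (S t / w T) := by
    intro T hT t ht
    have hwT : 0 < w T := (hw T hT).1
    have hSdiv : 0 ≤ S t / w T := div_nonneg (hSnn t) hwT.le
    have hE2S : ∀ τ, t0 ≤ τ → t - τ ≤ T → E τ t ≤ S t / w T := by
      intro τ hτ hτT
      apply Real.sSup_le _ hSdiv
      rintro r ⟨s', ⟨hs1, hs2⟩, i, rfl⟩
      have hts' : 0 ≤ t - s' := by linarith
      have hwle : w T ≤ w (t - s') :=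
        hwanti (Set.mem_Ici.mpr hts') (Set.mem_Ici.mpr hT) (by linarith)
      have h2 : dG * Ψ s' * w T ≤ S t :=
        (mul_le_mul_of_nonneg_left hwle (mul_nonneg hdG (hΨ0 s'))).trans
          (hSmem t s' (hτ.trans hs1) hs2)
      calc ‖y i s' - sbar s'‖ ≤ dG * Ψ s' := he' i s' (hτ.trans hs1)
        _ ≤ S t / w T := (le_div_iff₀ hwT).mpr h2
    by_cases hcase : t - t0 ≤ T
    · have h1 := hA t ht
      have h2 : γhat (E t0 t) ≤ γhat (S t / w T) :=
        hγmono (Set.mem_Ici.mpr (hEnn t0 t)) (Set.mem_Ici.mpr hSdiv)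
          (hE2S t0 le_rfl hcase)
      have h3 : 0 ≤ β C T := hβ.2.2 C hCnn T hT
      linarith
    · push_neg at hcase
      have hτ0 : t0 ≤ t - T := by linarith
      have h := key (t - T) hτ0 t (by linarith)
      have ht_τ : t - (t - T) = T := by ring
      rw [ht_τ] at h
      have h1 : β (D (t - T)) T ≤ β C T :=
        (hβ.1 T (Set.mem_Ici.mpr hT)).2.1.monotoneOn
          (Set.mem_Ici.mpr (hDnn _)) (Set.mem_Ici.mpr hCnn) (hB _ hτ0)
      have h2 : γhat (E (t - T) t) ≤ γhat (S t / w T) :=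
        hγmono (Set.mem_Ici.mpr (hEnn _ t)) (Set.mem_Ici.mpr hSdiv)
          (hE2S (t - T) hτ0 (by linarith))
      linarith
  -- the envelope function
  set G : ℝ → ℝ := fun r => sInf {v | ∃ T ≥ (0:ℝ), v = β C T + γhat (max r 0 / w T)}
    with hGdef
  have hGne : ∀ r : ℝ, {v | ∃ T ≥ (0:ℝ), v = β C T + γhat (max r 0 / w T)}.Nonempty :=
    fun r => ⟨β C 0 + γhat (max r 0 / w 0), 0, le_rfl, rfl⟩
  have hGbdd : ∀ r : ℝ, BddBelow {v | ∃ T ≥ (0:ℝ), v = β C T + γhat (max r 0 / w T)} := by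
    intro r
    refine ⟨0, ?_⟩
    rintro v ⟨T, hT, rfl⟩
    have := hβ.2.2 C hCnn T hT
    have := hγnn (max r 0 / w T) (div_nonneg (le_max_right _ _) (hw T hT).1.le)
    linarith
  have hGnn : ∀ r, 0 ≤ G r := by
    intro r
    apply le_csInf (hGne r)
    rintro v ⟨T, hT, rfl⟩
    have := hβ.2.2 C hCnn T hT
    have := hγnn (max r 0 / w T) (div_nonneg (le_max_right _ _) (hw T hT).1.le)
    linarith
  have hGmono : Monotone G := by
    intro r1 r2 h12
    apply le_csInf (hGne r2)
    rintro v ⟨T, hT, rfl⟩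
    refine (csInf_le (hGbdd r1) ⟨T, hT, rfl⟩).trans ?_
    have hwT : 0 < w T := (hw T hT).1
    have : γhat (max r1 0 / w T) ≤ γhat (max r2 0 / w T) := by
      apply hγmono (Set.mem_Ici.mpr (div_nonneg (le_max_right _ _) hwT.le))
        (Set.mem_Ici.mpr (div_nonneg (le_max_right _ _) hwT.le))
      exact (div_le_div_iff_of_pos_right hwT).mpr (max_le_max h12 le_rfl)
    linarith
  have hGbd : ∀ t, t0 ≤ t → D t ≤ G (S t) := by
    intro t ht
    apply le_csInf (hGne (S t))
    rintro v ⟨T, hT, rfl⟩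
    rw [max_eq_left (hSnn t)]
    exact hCbd T hT t ht
  have hGsmall : ∀ ε > (0:ℝ), ∃ δ > (0:ℝ), G δ < ε := by
    intro ε hε
    -- choose T with β C T < ε/2
    obtain ⟨T, hT0, hβT⟩ : ∃ T, 0 ≤ T ∧ β C T < ε / 2 := by
      rcases eq_or_lt_of_le hCnn with hC0 | hC0
      · refine ⟨0, le_rfl, ?_⟩
        rw [← hC0, (hβ.1 0 (Set.mem_Ici.mpr le_rfl)).2.2]
        linarith
      · have htend := (hβ.2.1 C hC0).2
        have hev : ∀ᶠ T in atTop, β C T < ε / 2 :=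
          htend.eventually_lt_const (by linarith)
        obtain ⟨T, hT1, hT2⟩ := (hev.and (eventually_ge_atTop (0:ℝ))).exists
        exact ⟨T, hT2, hT1⟩
    have hwT : 0 < w T := (hw T hT0).1
    -- continuity of γhat at 0
    have hcont : Tendsto γhat (nhdsWithin 0 (Set.Ici 0)) (nhds 0) := by
      have := (hγc 0 (Set.mem_Ici.mpr le_rfl))
      rw [ContinuousWithinAt, hγ0] at this
      exact this
    rw [Metric.tendsto_nhdsWithin_nhds] at hcont
    obtain ⟨δ0, hδ0, hδ0p⟩ := hcont (ε / 2) (by linarith)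
    refine ⟨δ0 * w T / 2, by positivity, ?_⟩
    have hle : G (δ0 * w T / 2) ≤ β C T + γhat (max (δ0 * w T / 2) 0 / w T) :=
      csInf_le (hGbdd _) ⟨T, hT0, rfl⟩
    have hmax : max (δ0 * w T / 2) 0 = δ0 * w T / 2 := max_eq_left (by positivity)
    have hdiv : δ0 * w T / 2 / w T = δ0 / 2 := by
      field_simp
    have hγsmall : γhat (δ0 / 2) < ε / 2 := by
      have := hδ0p (x := δ0 / 2) (Set.mem_Ici.mpr (by positivity))
        (by rw [Real.dist_eq, sub_zero, abs_of_nonneg (by positivity)]; linarith)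
      rwa [Real.dist_eq, sub_zero, abs_of_nonneg (hγnn _ (by positivity))] at this
    rw [hmax, hdiv] at hle
    linarith
  obtain ⟨γ, hγKinf, hγmaj⟩ := exists_Kinf_majorant G hGmono hGnn hGsmall
  refine ⟨γ, hγKinf, ?_⟩
  intro i t ht
  have hDle : D t ≤ γ (S t) := (hGbd t ht).trans (hγmaj (S t) (hSnn t))
  have hfst : ‖sh t - sbar t‖ ≤ D t := by
    have h := norm_fst_le ((sh t, fun j => zh j t) - (sbar t, fun j => z j t))
    rw [Prod.fst_sub] at h
    exact h
  have hsnd : ‖zh i t - z i t‖ ≤ D t := by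
    have h1 := norm_snd_le ((sh t, fun j => zh j t) - (sbar t, fun j => z j t))
    rw [Prod.snd_sub] at h1
    have h2 := norm_le_pi_norm ((fun j => zh j t) - fun j => z j t) i
    have h2' : ‖zh i t - z i t‖ ≤ ‖(fun j => zh j t) - fun j => z j t‖ := h2
    exact h2'.trans h1
  have h1 : ‖y i t - sh t‖ ≤ dG * Ψ t + D t := by
    have hsplit : y i t - sh t = (y i t - sbar t) + (sbar t - sh t) := by abel
    calc ‖y i t - sh t‖ = ‖(y i t - sbar t) + (sbar t - sh t)‖ := by rw [hsplit]
      _ ≤ ‖y i t - sbar t‖ + ‖sbar t - sh t‖ := norm_add_le _ _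
      _ ≤ dG * Ψ t + D t := by
          have := he' i t ht
          rw [norm_sub_rev (sbar t)]
          linarith [hfst]
  have h2 : ‖z i t - zh i t‖ ≤ D t := by
    rw [norm_sub_rev]; exact hsnd
  have hΨnn : 0 ≤ dG * Ψ t := mul_nonneg hdG (hΨ0 t)
  calc ‖(y i t, z i t) - (sh t, zh i t)‖
      = max ‖y i t - sh t‖ ‖z i t - zh i t‖ := by
        rw [Prod.mk_sub_mk, Prod.norm_def]
    _ ≤ γ (S t) + dG * Ψ t := by
        apply max_le <;> linarith
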